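/- Take the binary binomial interpolated triangle with u = −1 and v = α, and define the alternating row-sum sequence s̄(n) = Σ_{k=0}^{n} (−1)^k A(n,k). Then for all n ≥ 4: s̄(n) = (α² + 2β)·s̄(n-2) − β²·s̄(n-4). -/

import Mathlib

theorem stmt_11 (α β : ℝ) (hα : α ≠ 0) (hβ : β ≠ 0)
    (a : ℕ → ℝ) (ha : ∀ n, 2 ≤ n → a n = α * a (n-1) + β * a (n-2))
    (A : ℕ → ℕ → ℝ) (hA0 : ∀ n, A n 0 = a n)
    (hA : ∀ n k, 1 ≤ k → k ≤ n → A n k = (-1) * A n (k-1) + α * A (n-1) (k-1))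
    (sb : ℕ → ℝ) (hsb : ∀ n, sb n = ∑ k ∈ Finset.range (n+1), (-1:ℝ)^k * A n k) :
    ∀ n, 4 ≤ n → sb n = (α^2 + 2*β) * sb (n-2) - β^2 * sb (n-4) := by
  -- Key lemma: A (m+2) (j+1) = -β * A m j for j ≤ m
  have key : ∀ m, ∀ j, j ≤ m → A (m+2) (j+1) = -β * A m j := by
    intro m
    induction m using Nat.strong_induction_on with
    | _ m ih =>
      intro j
      induction j with
      | zero =>
        intro _
        have h1 : A (m+2) 1 = -1 * A (m+2) 0 + α * A (m+1) 0 :=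
          hA (m+2) 1 le_rfl (by omega)
        have h2 : a (m+2) = α * a (m+1) + β * a m := ha (m+2) (by omega)
        rw [h1, hA0, hA0, hA0, h2]
        ring
      | succ j ihj =>
        intro hj
        obtain ⟨m', rfl⟩ : ∃ m', m = m' + 1 := ⟨m-1, by omega⟩
        have e1 : A (m'+3) (j+2) = -1 * A (m'+3) (j+1) + α * A (m'+2) (j+1) :=
          hA (m'+3) (j+2) (by omega) (by omega)
        have e2 : A (m'+3) (j+1) = -β * A (m'+1) j := ihj (by omega)
        have e3 : A (m'+2) (j+1) = -β * A m' j := ih m' (by omega) j (by omega)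
        have e4 : A (m'+1) (j+1) = -1 * A (m'+1) j + α * A m' j :=
          hA (m'+1) (j+1) (by omega) (by omega)
        show A (m'+3) (j+2) = -β * A (m'+1) (j+1)
        rw [e1, e2, e3, e4]
        ring
  -- Diagonal satisfies the same recurrence as a
  have diag : ∀ n, A (n+2) (n+2) = α * A (n+1) (n+1) + β * A n n := by
    intro n
    have e1 : A (n+2) (n+2) = -1 * A (n+2) (n+1) + α * A (n+1) (n+1) :=
      hA (n+2) (n+2) (by omega) le_rfl
    have e2 : A (n+2) (n+1) = -β * A n n := key n n le_rfl
    rw [e1, e2]; ring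
  -- Star lemma: α * sb n = a (n+1) - (-1)^(n+1) * A (n+1) (n+1)
  have star : ∀ n, α * sb n = a (n+1) - (-1:ℝ)^(n+1) * A (n+1) (n+1) := by
    intro n
    have h1 : sb (n+1) = ∑ k ∈ Finset.range (n+2), (-1:ℝ)^k * A (n+1) k := hsb (n+1)
    rw [Finset.sum_range_succ'] at h1
    have h2 : ∀ k ∈ Finset.range (n+1),
        (-1:ℝ)^(k+1) * A (n+1) (k+1)
          = (-1:ℝ)^k * A (n+1) k - α * ((-1:ℝ)^k * A n k) := by
      intro k hk
      rw [Finset.mem_range] at hk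
      have e : A (n+1) (k+1) = -1 * A (n+1) k + α * A n k :=
        hA (n+1) (k+1) (by omega) (by omega)
      rw [e, pow_succ]
      ring
    rw [Finset.sum_congr rfl h2, Finset.sum_sub_distrib, ← Finset.mul_sum] at h1
    have h3 : sb (n+1) = (∑ k ∈ Finset.range (n+1), (-1:ℝ)^k * A (n+1) k)
        + (-1:ℝ)^(n+1) * A (n+1) (n+1) := by
      rw [hsb (n+1)]; exact Finset.sum_range_succ _ _
    rw [← hsb n, hA0] at h1
    norm_num at h1
    linarith [h1, h3]
  -- Step lemma: sb (n+2) = -α * sb (n+1) + β * sb n + 2 * a (n+2)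
  have step : ∀ n, sb (n+2) = -α * sb (n+1) + β * sb n + 2 * a (n+2) := by
    intro n
    have s0 := star n
    have s1 : α * sb (n+1) = a (n+2) - (-1:ℝ)^(n+2) * A (n+2) (n+2) := star (n+1)
    have s2 : α * sb (n+2) = a (n+3) - (-1:ℝ)^(n+3) * A (n+3) (n+3) := star (n+2)
    have d : A (n+3) (n+3) = α * A (n+2) (n+2) + β * A (n+1) (n+1) := diag (n+1)
    have hr : a (n+3) = α * a (n+2) + β * a (n+1) := ha (n+3) (by omega)
    have hp1 : (-1:ℝ)^(n+2) = -(-1:ℝ)^(n+1) := by rw [pow_succ]; ring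
    have hp2 : (-1:ℝ)^(n+3) = (-1:ℝ)^(n+1) := by
      rw [show n+3 = (n+1)+2 from rfl, pow_add]; norm_num
    rw [hp1] at s1
    rw [hp2] at s2
    have hcalc : α * sb (n+2) = α * (-α * sb (n+1) + β * sb n + 2 * a (n+2)) := by
      linear_combination s2 + α * s1 - β * s0 + hr - (-1:ℝ)^(n+1) * d
    exact mul_left_cancel₀ hα hcalc
  intro n hn
  obtain ⟨m, rfl⟩ : ∃ m, n = m + 4 := ⟨n-4, by omega⟩
  have e1 : sb (m+4) = -α * sb (m+3) + β * sb (m+2) + 2 * a (m+4) := step (m+2)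
  have e2 : sb (m+3) = -α * sb (m+2) + β * sb (m+1) + 2 * a (m+3) := step (m+1)
  have e3 : sb (m+2) = -α * sb (m+1) + β * sb m + 2 * a (m+2) := step m
  have e4 : a (m+4) = α * a (m+3) + β * a (m+2) := ha (m+4) (by omega)
  show sb (m+4) = (α^2 + 2*β) * sb (m+2) - β^2 * sb m
  linear_combination e1 - α * e2 - β * e3 + 2 * e4
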